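/- The languages L(C) (acceptance from P), L(C from N), and the set W of improperly shaped trees partition the space of trees over {a,b,∨,¬}: every well-shaped tree (t ∉ W) is accepted from exactly one of the states P, N, and no tree in W is accepted from either; the proof is by transfinite induction on the ordinal rank of well-shaped trees. -/

import Mathlib

/-- The alphabet {a, b, ∨, ¬}. -/
inductive A4 | la | lb | lor | lneg
deriving DecidableEq

instance : TopologicalSpace A4 := ⊥
instance : DiscreteTopology A4 := ⟨rfl⟩

/-- Infinite binary trees over {a, b, ∨, ¬}. -/
abbrev Tree4 := List (Fin 2) → A4

/-- The length-`n` prefix of a branch. -/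
def pre (β : ℕ → Fin 2) (n : ℕ) : List (Fin 2) := List.ofFn (fun i : Fin n => β i)

/-- `r` occurs infinitely often in the sequence `g`. -/
def InfOften (g : ℕ → ℕ) (r : ℕ) : Prop := ∀ m, ∃ n ≥ m, g n = r

/-- Parity condition: the maximal value occurring infinitely often is even. -/
def ParityOk (g : ℕ → ℕ) : Prop :=
  ∃ r, Even r ∧ InfOften g r ∧ ∀ r', InfOften g r' → r' ≤ r

/-- States of the unambiguous automaton `C` (including the states of `A_G` and `A_L`). -/
inductive QC
  | P | N | Pv | Nv | Tv | TS | Top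
  | g1 | g2 | top2 | bot1 | l1 | l0 | top0
deriving DecidableEq

def rankC : QC → ℕ
  | .P => 1 | .N => 1 | .Pv => 1 | .TS => 1
  | .Nv => 0 | .Tv => 0 | .Top => 0
  | .g1 => 1 | .g2 => 2 | .top2 => 2 | .bot1 => 1 | .l1 => 1 | .l0 => 0 | .top0 => 0

/-- Transition relation of `C`. -/
def deltaC : QC → A4 → QC → QC → Prop := fun q a q1 q2 =>
  match q, a with
  -- the formula layer
  | .P, .lor | .Pv, .lor => (q1 = .Tv ∧ q2 = .P) ∨ (q1 = .Pv ∧ q2 = .N)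
  | .N, .lor | .Nv, .lor => q1 = .Nv ∧ q2 = .N
  | .Tv, .lor | .TS, .lor => q1 = .Tv ∧ q2 = .TS
  | .P, .lneg => q1 = .Top ∧ q2 = .N
  | .N, .lneg => q1 = .Top ∧ q2 = .P
  | .TS, .lneg => q1 = .Top ∧ q2 = .TS
  | .TS, .la | .TS, .lb => q1 = .Top ∧ q2 = .Top
  | .Top, _ => q1 = .Top ∧ q2 = .Top
  -- on a or b, state P acts as g₁ of A_G, state N acts as l₁ of A_L
  | .P, .la => (q1 = .g2 ∧ q2 = .top2) ∨ (q1 = .l1 ∧ q2 = .g1)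
  | .P, .lb => q1 = .bot1 ∧ q2 = .bot1
  | .N, .la => q1 = .l1 ∧ q2 = .l0
  | .N, .lb => q1 = .top0 ∧ q2 = .top0
  -- the A_G component (letters other than a are treated like b)
  | .g1, .la | .g2, .la => (q1 = .g2 ∧ q2 = .top2) ∨ (q1 = .l1 ∧ q2 = .g1)
  | .g1, _ | .g2, _ => q1 = .bot1 ∧ q2 = .bot1
  -- the A_L component
  | .l1, .la | .l0, .la => q1 = .l1 ∧ q2 = .l0
  | .l1, _ | .l0, _ => q1 = .top0 ∧ q2 = .top0
  | .top2, _ => q1 = .top2 ∧ q2 = .top2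
  | .bot1, _ => q1 = .bot1 ∧ q2 = .bot1
  | .top0, _ => q1 = .top0 ∧ q2 = .top0
  -- no transitions in the remaining cases
  | _, _ => False

/-- A run of `C` on `t` starting in state `q0`. -/
def IsRunC (t : Tree4) (q0 : QC) (ρ : List (Fin 2) → QC) : Prop :=
  ρ [] = q0 ∧ ∀ v : List (Fin 2), deltaC (ρ v) (t v) (ρ (v ++ [0])) (ρ (v ++ [1]))

/-- An accepting run: the parity condition holds on every branch. -/
def AccRunC (t : Tree4) (q0 : QC) (ρ : List (Fin 2) → QC) : Prop :=
  IsRunC t q0 ρ ∧ ∀ β : ℕ → Fin 2, ParityOk (fun n => rankC (ρ (pre β n)))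

/-- `t` is accepted by `C` started in state `q0`. -/
def AcceptsFrom (q0 : QC) (t : Tree4) : Prop := ∃ ρ, AccRunC t q0 ρ

/-- The set `W` of improperly shaped trees. -/
def Wbad : Set Tree4 :=
  {t | (∃ β : ℕ → Fin 2,
          (∀ n, t (pre β n) = A4.lor ∨ t (pre β n) = A4.lneg) ∧
          (∀ m, ∃ n ≥ m, β n = 1) ∧
          (∀ n, t (pre β n) = A4.lneg → β n = 1)) ∨
       (∃ w : List (Fin 2),
          t (w ++ [0]) ≠ A4.lor ∧ t w = A4.lor ∧
          (∀ u, u <+: w → (t u = A4.lor ∨ t u = A4.lneg)) ∧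
          (∀ (u : List (Fin 2)) (d : Fin 2),
            (u ++ [d]) <+: (w ++ [(0 : Fin 2)]) → t u = A4.lneg → d = 1))}

section Aux
open Classical

/-! ### Basic lemmas about `pre` -/

theorem pre_zero (β : ℕ → Fin 2) : pre β 0 = [] := rfl

theorem pre_length (β : ℕ → Fin 2) (n : ℕ) : (pre β n).length = n := by
  simp [pre]

theorem pre_succ (β : ℕ → Fin 2) (n : ℕ) : pre β (n+1) = pre β n ++ [β n] := by
  rw [pre, List.ofFn_succ', List.concat_eq_append]
  rfl

theorem pre_cons (β : ℕ → Fin 2) (n : ℕ) :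
    pre β (n+1) = β 0 :: pre (fun i => β (i+1)) n := by
  rw [pre, List.ofFn_succ]
  rfl

theorem pre_congr {β γ : ℕ → Fin 2} {n : ℕ} (h : ∀ i < n, β i = γ i) :
    pre β n = pre γ n := by
  unfold pre
  congr 1
  funext i
  exact h i i.isLt

theorem pre_add (β : ℕ → Fin 2) (m k : ℕ) :
    pre β (m + k) = pre β m ++ pre (fun i => β (m + i)) k := by
  induction k with
  | zero => simp [pre_zero]
  | succ k ih =>
      rw [show m + (k+1) = (m+k)+1 from rfl, pre_succ, ih, pre_succ, List.append_assoc]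

theorem pre_getElem (β : ℕ → Fin 2) (n i : ℕ) (h : i < n) :
    (pre β n)[i]'(by simpa [pre_length] using h) = β i := by
  simp [pre]

theorem pre_const0 (n : ℕ) : pre (fun _ => (0 : Fin 2)) n = List.replicate n 0 := by
  induction n with
  | zero => rfl
  | succ n ih => rw [pre_succ, ih, ← List.replicate_succ']

theorem fin2_cases (d : Fin 2) : d = 0 ∨ d = 1 := by
  fin_cases d <;> simp

theorem fin2_ne {d e : Fin 2} (h : d ≠ e) : ∀ x : Fin 2, x ≠ e → d = x := by
  fin_cases d <;> fin_cases e <;> simp_all <;> (intro x; fin_cases x <;> simp_all)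

/-! ### Parity lemmas -/

theorem infOften_shift (g : ℕ → ℕ) (k r : ℕ) :
    InfOften (fun n => g (n + k)) r ↔ InfOften g r := by
  constructor
  · intro h m
    obtain ⟨n, hn, he⟩ := h m
    exact ⟨n + k, le_trans hn (Nat.le_add_right _ _), he⟩
  · intro h m
    obtain ⟨n, hn, he⟩ := h (m + k)
    refine ⟨n - k, by omega, ?_⟩
    show g (n - k + k) = r
    rw [Nat.sub_add_cancel (by omega)]; exact he

theorem parityOk_shift {g : ℕ → ℕ} (k : ℕ) :
    ParityOk (fun n => g (n + k)) ↔ ParityOk g := by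
  unfold ParityOk
  constructor
  · rintro ⟨r, he, hio, hmax⟩
    exact ⟨r, he, (infOften_shift g k r).1 hio,
      fun r' h' => hmax r' ((infOften_shift g k r').2 h')⟩
  · rintro ⟨r, he, hio, hmax⟩
    exact ⟨r, he, (infOften_shift g k r).2 hio,
      fun r' h' => hmax r' ((infOften_shift g k r').1 h')⟩

theorem parityOk_of_le {g : ℕ → ℕ} {r N : ℕ} (he : Even r) (hio : InfOften g r)
    (hb : ∀ n ≥ N, g n ≤ r) : ParityOk g := by
  refine ⟨r, he, hio, fun r' h' => ?_⟩
  obtain ⟨n, hn, hg⟩ := h' N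
  exact hg ▸ hb n hn

theorem not_parityOk {g : ℕ → ℕ} {r N : ℕ} (ho : Odd r) (hio : InfOften g r)
    (hb : ∀ n ≥ N, g n ≤ r) : ¬ ParityOk g := by
  rintro ⟨s, he, hio', hmax⟩
  have h1 : r ≤ s := hmax r hio
  obtain ⟨n, hn, hg⟩ := hio' N
  have h2 : s ≤ r := hg ▸ hb n hn
  have : r = s := le_antisymm h1 h2
  subst this
  exact (Nat.not_odd_iff_even.mpr he) ho

theorem parityOk_of_eventually {g : ℕ → ℕ} {N : ℕ} (h : ∀ n ≥ N, g n = 0) :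
    ParityOk g :=
  parityOk_of_le (r := 0) (N := N) (Even.zero)
    (fun m => ⟨max m N, le_max_left _ _, h _ (le_max_right _ _)⟩)
    (fun n hn => le_of_eq (h n hn))

end Aux
/-! ### Subtrees and run lemmas -/

def subt (t : Tree4) (w : List (Fin 2)) : Tree4 := fun u => t (w ++ u)

theorem subt_subt (t : Tree4) (u v : List (Fin 2)) :
    subt (subt t u) v = subt t (u ++ v) := by
  funext x
  simp [subt]

theorem subt_nil (t : Tree4) : subt t [] = t := rfl

theorem subt_apply (t : Tree4) (w u : List (Fin 2)) : subt t w u = t (w ++ u) := rfl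

/-- the branch going through `w` and then following `β`. -/
noncomputable def extB (w : List (Fin 2)) (β : ℕ → Fin 2) : ℕ → Fin 2 :=
  fun n => if h : n < w.length then w.get ⟨n, h⟩ else β (n - w.length)

theorem pre_extB (w : List (Fin 2)) (β : ℕ → Fin 2) (m : ℕ) :
    pre (extB w β) (w.length + m) = w ++ pre β m := by
  induction m with
  | zero =>
      simp only [Nat.add_zero, pre_zero, List.append_nil]
      apply List.ext_getElem (by simp [pre_length])
      intro i h1 h2
      rw [pre_getElem _ _ _ (by simpa [pre_length] using h1)]
      simp only [extB]
      rw [dif_pos h2]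
      simp
  | succ m ih =>
      rw [show w.length + (m+1) = (w.length + m) + 1 from rfl, pre_succ, ih, pre_succ,
        List.append_assoc]
      congr 2
      simp only [extB]
      rw [dif_neg (by omega)]
      rw [Nat.add_sub_cancel_left]

theorem run_restrict {t : Tree4} {q : QC} {ρ : List (Fin 2) → QC}
    (h : AccRunC t q ρ) (w : List (Fin 2)) :
    AccRunC (subt t w) (ρ w) (fun u => ρ (w ++ u)) := by
  obtain ⟨⟨_, hstep⟩, hpar⟩ := h
  refine ⟨⟨by simp, fun v => ?_⟩, fun β => ?_⟩
  · have := hstep (w ++ v)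
    simpa [subt_apply, List.append_assoc] using this
  · have h1 := hpar (extB w β)
    have h2 := (parityOk_shift (g := fun n => rankC (ρ (pre (extB w β) n))) w.length).2 h1
    have h3 : (fun n => rankC (ρ (pre (extB w β) (n + w.length)))) =
        (fun n => rankC ((fun u => ρ (w ++ u)) (pre β n))) := by
      funext n
      rw [Nat.add_comm, pre_extB]
    rwa [h3] at h2

theorem accepts_restrict {t : Tree4} {q : QC} {ρ : List (Fin 2) → QC}
    (h : AccRunC t q ρ) (w : List (Fin 2)) : AcceptsFrom (ρ w) (subt t w) :=
  ⟨_, run_restrict h w⟩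

/-- constant runs for the accept-all states. -/
theorem accepts_const {q : QC} (he : Even (rankC q)) (hd : ∀ a, deltaC q a q q)
    (t : Tree4) : AcceptsFrom q t := by
  refine ⟨fun _ => q, ⟨rfl, fun v => hd _⟩, fun β => ?_⟩
  exact parityOk_of_le (N := 0) he (fun m => ⟨m, le_refl _, rfl⟩) (fun n _ => le_refl _)

theorem top_accepts (t : Tree4) : AcceptsFrom .Top t :=
  accepts_const (by simp [rankC]) (fun a => by cases a <;> exact ⟨rfl, rfl⟩) t

theorem top0_accepts (t : Tree4) : AcceptsFrom .top0 t :=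
  accepts_const (by simp [rankC]) (fun a => by cases a <;> exact ⟨rfl, rfl⟩) t

theorem top2_accepts (t : Tree4) : AcceptsFrom .top2 t :=
  accepts_const (by simp [rankC]) (fun a => by cases a <;> exact ⟨rfl, rfl⟩) t

theorem bot1_rejects (t : Tree4) : ¬ AcceptsFrom .bot1 t := by
  rintro ⟨ρ, ⟨h0, hstep⟩, hpar⟩
  have key : ∀ m, ρ (List.replicate m 0) = .bot1 := by
    intro m
    induction m with
    | zero => exact h0
    | succ m ih =>
        have := hstep (List.replicate m 0)
        rw [ih] at this
        have h2 : ρ (List.replicate m 0 ++ [0]) = .bot1 := by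
          cases ht : t (List.replicate m 0) <;> rw [ht] at this <;> exact this.1
        rw [List.replicate_succ' ]
        exact h2
  have := hpar (fun _ => 0)
  refine not_parityOk (r := 1) (N := 0) (by decide) ?_ (fun n _ => ?_) this
  · intro m
    refine ⟨m, le_refl _, ?_⟩
    show rankC (ρ (pre (fun _ => 0) m)) = 1
    rw [pre_const0, key]
    rfl
  · show rankC (ρ (pre (fun _ => 0) n)) ≤ 1
    rw [pre_const0, key]
    exact le_refl _

theorem run_ne_bot1 {t : Tree4} {q : QC} {ρ : List (Fin 2) → QC}
    (h : AccRunC t q ρ) (v : List (Fin 2)) : ρ v ≠ .bot1 := by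
  intro hv
  exact bot1_rejects _ (hv ▸ accepts_restrict h v)

/-- renaming the root state when the transitions agree. -/
theorem acceptsFrom_congr_root {t : Tree4} {q q' : QC}
    (hd : ∀ x y, deltaC q (t []) x y → deltaC q' (t []) x y)
    (hr : rankC q = rankC q') (h : AcceptsFrom q t) : AcceptsFrom q' t := by
  obtain ⟨ρ, ⟨h0, hstep⟩, hpar⟩ := h
  refine ⟨fun u => if u = [] then q' else ρ u, ⟨by simp, fun v => ?_⟩, fun β => ?_⟩
  · have hne : ∀ (v : List (Fin 2)) (d : Fin 2), v ++ [d] ≠ ([] : List (Fin 2)) := by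
      intro v d h
      simpa using congrArg List.length h
    show deltaC (if v = [] then q' else ρ v) (t v)
      (if v ++ [0] = [] then q' else ρ (v ++ [0]))
      (if v ++ [1] = [] then q' else ρ (v ++ [1]))
    rw [if_neg (hne v 0), if_neg (hne v 1)]
    cases v with
    | nil =>
        simp only [if_pos rfl]
        exact hd _ _ (h0 ▸ hstep [])
    | cons d u =>
        rw [if_neg (by simp)]
        exact hstep (d :: u)
  · have := hpar β
    convert this using 1
    funext n
    cases n with
    | zero => simp [pre_zero, h0, hr]
    | succ n =>
        have hne : pre β (n+1) ≠ [] := by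
          intro h
          simpa [pre_length] using congrArg List.length h
        show rankC (if pre β (n+1) = [] then q' else ρ (pre β (n+1))) = _
        rw [if_neg hne]

/-- One-step gluing of accepting runs. -/
theorem glue1 {t : Tree4} {q qL qR : QC}
    (hδ : deltaC q (t []) qL qR)
    (hL : AcceptsFrom qL (subt t [0])) (hR : AcceptsFrom qR (subt t [1])) :
    AcceptsFrom q t := by
  obtain ⟨ρL, ⟨hL0, hLs⟩, hLp⟩ := hL
  obtain ⟨ρR, ⟨hR0, hRs⟩, hRp⟩ := hR
  refine ⟨fun v => match v with
    | [] => q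
    | d :: u => if d = 0 then ρL u else ρR u, ⟨rfl, fun v => ?_⟩, fun β => ?_⟩
  · match v with
    | [] =>
        simpa [hL0, hR0] using hδ
    | d :: u =>
        rcases fin2_cases d with h | h <;> subst h
        · simpa [subt] using hLs u
        · simpa [subt] using hRs u
  · rw [← parityOk_shift (k := 1)]
    rcases fin2_cases (β 0) with h | h
    · have := hLp (fun i => β (i+1))
      convert this using 1
      funext n
      simp only []
      rw [show n + 1 = n + 1 from rfl, pre_cons, h]
      simp
    · have := hRp (fun i => β (i+1))
      convert this using 1
      funext n
      simp only []
      rw [pre_cons, h]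
      simp
/-! ### Gluing runs along an infinite branch -/

def oth : Fin 2 → Fin 2 := fun d => match d with | 0 => 1 | 1 => 0

theorem oth_ne (d : Fin 2) : oth d ≠ d := by fin_cases d <;> decide

theorem eq_oth_of_ne {d e : Fin 2} (h : d ≠ e) : d = oth e := by
  fin_cases d <;> fin_cases e <;> simp_all [oth]

def glueRun (γ : ℕ → Fin 2) (F : ℕ → QC) (R : ℕ → List (Fin 2) → QC) :
    ℕ → List (Fin 2) → QC
  | k, [] => F k
  | k, d :: u => if d = γ k then glueRun γ F R (k+1) u else R k u

theorem glueRun_seg (γ : ℕ → Fin 2) (F : ℕ → QC) (R : ℕ → List (Fin 2) → QC) :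
    ∀ (m k : ℕ) (u : List (Fin 2)),
      glueRun γ F R k (List.ofFn (fun i : Fin m => γ (k + i)) ++ u) =
      glueRun γ F R (k + m) u := by
  intro m
  induction m with
  | zero => intro k u; simp
  | succ m ih =>
      intro k u
      rw [List.ofFn_succ]
      show glueRun γ F R k (γ (k + 0) :: (List.ofFn (fun i : Fin m => γ (k + (↑i + 1))) ++ u)) = _
      rw [glueRun, if_pos (by rw [Nat.add_zero])]
      have he : (List.ofFn (fun i : Fin m => γ (k + (↑i + 1)))) =
          (List.ofFn (fun i : Fin m => γ ((k+1) + ↑i))) := by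
        congr 1
        funext i
        congr 1
        omega
      rw [he, ih (k+1) u]
      congr 1
      omega

theorem glueRun_pre (γ : ℕ → Fin 2) (F : ℕ → QC) (R : ℕ → List (Fin 2) → QC)
    (m : ℕ) (u : List (Fin 2)) :
    glueRun γ F R 0 (pre γ m ++ u) = glueRun γ F R m u := by
  have := glueRun_seg γ F R m 0 u
  simpa [pre] using this

theorem glueRun_F (γ : ℕ → Fin 2) (F : ℕ → QC) (R : ℕ → List (Fin 2) → QC) (m : ℕ) :
    glueRun γ F R 0 (pre γ m) = F m := by
  have := glueRun_pre γ F R m []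
  simpa [glueRun] using this

theorem glueRun_R (γ : ℕ → Fin 2) (F : ℕ → QC) (R : ℕ → List (Fin 2) → QC)
    (m : ℕ) (u : List (Fin 2)) :
    glueRun γ F R 0 (pre γ m ++ oth (γ m) :: u) = R m u := by
  rw [glueRun_pre, glueRun, if_neg (oth_ne (γ m))]

/-- every node is either on the branch `γ` or deviates from it at some point. -/
theorem branch_decomp (γ : ℕ → Fin 2) (v : List (Fin 2)) :
    v = pre γ v.length ∨ ∃ m u, v = pre γ m ++ oth (γ m) :: u := by
  by_cases h : ∀ i, (hi : i < v.length) → v[i] = γ i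
  · left
    apply List.ext_getElem (by simp [pre_length])
    intro i h1 h2
    rw [pre_getElem _ _ _ (by simpa [pre_length] using h2)]
    exact h i h1
  · right
    push_neg at h
    have hex : ∃ i, ∃ (hi : i < v.length), v[i] ≠ γ i := by
      obtain ⟨i, hi, hne⟩ := h
      exact ⟨i, hi, hne⟩
    classical
    let m := Nat.find hex
    obtain ⟨hm, hne⟩ := Nat.find_spec hex
    refine ⟨m, v.drop (m+1), ?_⟩
    have h1 : v.take m = pre γ m := by
      apply List.ext_getElem (by simp [pre_length]; omega)
      intro i hi1 hi2
      rw [pre_getElem _ _ _ (by simpa [pre_length] using hi2)]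
      rw [List.getElem_take]
      by_contra hcon
      have hlt : i < m := by simp [List.length_take] at hi1; omega
      exact Nat.find_min hex hlt ⟨by omega, hcon⟩
    have h2 : v[m] = oth (γ m) := eq_oth_of_ne hne
    calc v = v.take m ++ v[m] :: v.drop (m+1) := by
              rw [List.getElem_cons_drop, List.take_append_drop]
         _ = pre γ m ++ oth (γ m) :: v.drop (m+1) := by rw [h1, h2]

theorem glueBranch {t : Tree4} (γ : ℕ → Fin 2) (F G : ℕ → QC)
    (hδ : ∀ k, deltaC (F k) (t (pre γ k))
            (if γ k = 0 then F (k+1) else G k)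
            (if γ k = 0 then G k else F (k+1)))
    (hG : ∀ k, AcceptsFrom (G k) (subt t (pre γ k ++ [oth (γ k)])))
    (hpar : ParityOk (fun k => rankC (F k))) :
    AcceptsFrom (F 0) t := by
  classical
  choose R hR using hG
  set ρ := glueRun γ F R 0 with hρ
  have hstep : ∀ v, deltaC (ρ v) (t v) (ρ (v ++ [0])) (ρ (v ++ [1])) := by
    intro v
    rcases branch_decomp γ v with h | ⟨m, u, h⟩
    · set m := v.length
      rw [h]
      have e0 : ρ (pre γ m) = F m := glueRun_F γ F R m
      have eb : ρ (pre γ m ++ [γ m]) = F (m+1) := by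
        rw [← pre_succ]; exact glueRun_F γ F R (m+1)
      have eo : ρ (pre γ m ++ [oth (γ m)]) = G m := by
        have := glueRun_R γ F R m []
        rw [hρ]
        rw [show pre γ m ++ [oth (γ m)] = pre γ m ++ oth (γ m) :: [] from rfl, this]
        exact (hR m).1.1
      have hd := hδ m
      rcases fin2_cases (γ m) with hg | hg
      · rw [hg] at eb eo hd
        rw [show oth (0 : Fin 2) = 1 from rfl] at eo
        rw [e0, eb, eo]
        simpa using hd
      · rw [hg] at eb eo hd
        rw [show oth (1 : Fin 2) = 0 from rfl] at eo
        rw [e0, eb, eo]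
        simpa using hd
    · rw [h]
      have e1 : ∀ w, ρ (pre γ m ++ oth (γ m) :: w) = R m w := fun w => glueRun_R γ F R m w
      rw [show (pre γ m ++ oth (γ m) :: u) ++ [0] = pre γ m ++ oth (γ m) :: (u ++ [0]) by simp,
          show (pre γ m ++ oth (γ m) :: u) ++ [1] = pre γ m ++ oth (γ m) :: (u ++ [1]) by simp,
          e1, e1, e1]
      have := (hR m).1.2 u
      have ht : subt t (pre γ m ++ [oth (γ m)]) u = t (pre γ m ++ oth (γ m) :: u) := by
        rw [subt_apply]
        simp
      rwa [ht] at this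
  refine ⟨ρ, ⟨glueRun_F γ F R 0, hstep⟩, fun β => ?_⟩
  by_cases hb : ∀ n, β n = γ n
  · have : (fun n => rankC (ρ (pre β n))) = fun k => rankC (F k) := by
      funext n
      rw [pre_congr (fun i _ => hb i), hρ, glueRun_F]
    rw [this]
    exact hpar
  · push_neg at hb
    classical
    let m := Nat.find hb
    have hm : β m ≠ γ m := Nat.find_spec hb
    have hmin : ∀ i < m, β i = γ i := fun i hi => by
      by_contra hc
      exact Nat.find_min hb hi hc
    have hoth : β m = oth (γ m) := eq_oth_of_ne hm
    rw [← parityOk_shift (k := m + 1)]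
    have hdec : ∀ n, pre β (n + (m+1)) = pre γ m ++ oth (γ m) :: pre (fun i => β (m+1+i)) n := by
      intro n
      rw [show n + (m+1) = (m+1) + n from Nat.add_comm _ _, pre_add]
      rw [pre_succ, pre_congr (fun i hi => hmin i hi), hoth]
      simp
    have : (fun n => rankC (ρ (pre β (n + (m+1))))) =
        fun n => rankC (R m (pre (fun i => β (m+1+i)) n)) := by
      funext n
      rw [hdec n, hρ, glueRun_R]
    rw [this]
    exact (hR m).2 _
/-! ### Deterministic runs -/

def detRun (st : QC → A4 → Fin 2 → QC) : Tree4 → QC → List (Fin 2) → QC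
  | _, q, [] => q
  | t, q, d :: u => detRun st (subt t [d]) (st q (t []) d) u

theorem detRun_snoc (st : QC → A4 → Fin 2 → QC) (t : Tree4) (q : QC)
    (u : List (Fin 2)) (d : Fin 2) :
    detRun st t q (u ++ [d]) = st (detRun st t q u) (t u) d := by
  induction u generalizing t q with
  | nil => rfl
  | cons d' u ih =>
      show detRun st (subt t [d']) (st q (t []) d') (u ++ [d]) = _
      rw [ih]
      rfl

theorem detRun_branch (st : QC → A4 → Fin 2 → QC) (t : Tree4) (q : QC)
    (β : ℕ → Fin 2) (n : ℕ) :
    detRun st t q (pre β (n+1)) =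
      st (detRun st t q (pre β n)) (t (pre β n)) (β n) := by
  rw [pre_succ, detRun_snoc]

/-! ### The language `G` and the `A_L` component -/

def Gset (t : Tree4) : Prop :=
  ∃ β : ℕ → Fin 2, (∀ n, t (pre β n) = A4.la) ∧ (∀ m, ∃ n ≥ m, β n = 0)

theorem Gset_root {t : Tree4} (h : Gset t) : t [] = A4.la := by
  obtain ⟨β, hl, _⟩ := h
  exact hl 0

theorem Gset_tail {t : Tree4} {β : ℕ → Fin 2} (hl : ∀ n, t (pre β n) = A4.la)
    (hz : ∀ m, ∃ n ≥ m, β n = 0) : Gset (subt t [β 0]) := by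
  refine ⟨fun i => β (i+1), fun n => ?_, fun m => ?_⟩
  · have := hl (n+1)
    rw [pre_cons] at this
    exact this
  · obtain ⟨n, hn, hb⟩ := hz (m+1)
    refine ⟨n - 1, by omega, ?_⟩
    show β (n - 1 + 1) = 0
    rwa [show n - 1 + 1 = n by omega]

theorem Gset_step {t : Tree4} (h : Gset t) (h0 : ¬ Gset (subt t [0])) :
    Gset (subt t [1]) := by
  obtain ⟨β, hl, hz⟩ := h
  rcases fin2_cases (β 0) with hb | hb
  · exact absurd (hb ▸ Gset_tail hl hz) h0
  · exact hb ▸ Gset_tail hl hz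

/-- the deterministic transition function of `A_L`. -/
def stL : QC → A4 → Fin 2 → QC := fun q a d =>
  match q, a with
  | .l1, .la | .l0, .la => if d = 0 then .l1 else .l0
  | _, _ => .top0

theorem stL_mem (q : QC) (a : A4) (d : Fin 2) :
    stL q a d = .l1 ∨ stL q a d = .l0 ∨ stL q a d = .top0 := by
  cases q <;> cases a <;> fin_cases d <;> decide

theorem stL_delta (q : QC) (hq : q = .l1 ∨ q = .l0 ∨ q = .top0) (a : A4) :
    deltaC q a (stL q a 0) (stL q a 1) := by
  rcases hq with rfl | rfl | rfl <;> cases a <;> exact ⟨rfl, rfl⟩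

theorem stL_top0 (a : A4) (d : Fin 2) : stL .top0 a d = .top0 := by
  cases a <;> rfl

theorem l1_mem (t : Tree4) (v : List (Fin 2)) :
    detRun stL t .l1 v = .l1 ∨ detRun stL t .l1 v = .l0 ∨
      detRun stL t .l1 v = .top0 := by
  rcases List.eq_nil_or_concat v with rfl | ⟨u, d, rfl⟩
  · left; rfl
  · rw [List.concat_eq_append, detRun_snoc]
    exact stL_mem _ _ _

theorem l1_accepts {t : Tree4} (h : ¬ Gset t) : AcceptsFrom .l1 t := by
  refine ⟨detRun stL t .l1, ⟨rfl, fun v => ?_⟩, fun β => ?_⟩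
  · rw [detRun_snoc, detRun_snoc]
    exact stL_delta _ (l1_mem t v) _
  · set q : ℕ → QC := fun n => detRun stL t .l1 (pre β n) with hq
    have hstep : ∀ n, q (n+1) = stL (q n) (t (pre β n)) (β n) :=
      fun n => detRun_branch stL t .l1 β n
    by_cases htop : ∃ n0, q n0 = .top0
    · obtain ⟨n0, h0⟩ := htop
      have hmono : ∀ n ≥ n0, q n = .top0 := by
        intro n hn
        induction n with
        | zero => exact (Nat.le_zero.mp hn) ▸ h0
        | succ n ih =>
            rcases Nat.lt_or_ge n0 (n+1) with h1 | h1
            · have h2 : n0 ≤ n := by omega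
              rw [hstep n, ih h2, stL_top0]
            · have he : n0 = n + 1 := by omega
              rw [← he]
              exact h0
      exact parityOk_of_eventually (N := n0) (fun n hn => by
        show rankC (q n) = 0
        rw [hmono n hn]; rfl)
    · push_neg at htop
      have hmem : ∀ n, q n = .l1 ∨ q n = .l0 := by
        intro n
        rcases l1_mem t (pre β n) with h1 | h1 | h1
        · exact Or.inl h1
        · exact Or.inr h1
        · exact absurd h1 (htop n)
      have hlab : ∀ n, t (pre β n) = A4.la := by
        intro n
        by_contra hc
        apply htop (n+1)
        rw [hstep n]
        rcases hmem n with h1 | h1 <;> rw [h1] <;>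
          cases hx : t (pre β n) <;> first | (exact absurd hx hc) | rfl
      have hz : ¬ (∀ m, ∃ n ≥ m, β n = 0) := fun hz => h ⟨β, hlab, hz⟩
      push_neg at hz
      obtain ⟨m, hm⟩ := hz
      refine parityOk_of_eventually (N := m + 1) (fun n hn => ?_)
      show rankC (q n) = 0
      obtain ⟨n', rfl⟩ : ∃ n', n = n' + 1 := ⟨n - 1, by omega⟩
      have hb1 : β n' = 1 := by
        rcases fin2_cases (β n') with h1 | h1
        · exact absurd h1 (hm n' (by omega))
        · exact h1
      rw [hstep n', hb1, hlab n']
      rcases hmem n' with h1 | h1 <;> rw [h1] <;> rfl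

theorem l1_rejects {t : Tree4} (h : Gset t) : ¬ AcceptsFrom .l1 t := by
  rintro ⟨ρ, ⟨h0, hstep⟩, hpar⟩
  obtain ⟨β, hlab, hz⟩ := h
  have key : ∀ n, (ρ (pre β n) = .l1 ∨ ρ (pre β n) = .l0) ∧
      (ρ (pre β (n+1)) = if β n = 0 then QC.l1 else QC.l0) := by
    intro n
    induction n with
    | zero =>
        refine ⟨Or.inl h0, ?_⟩
        have hl0 : t [] = A4.la := by
          have := hlab 0
          rwa [pre_zero] at this
        have hd := hstep []
        rw [h0, hl0] at hd
        rw [pre_succ β 0, pre_zero]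
        rcases fin2_cases (β 0) with h1 | h1
        · rw [h1, if_pos rfl]; exact hd.1
        · rw [h1, if_neg (by decide)]; exact hd.2
    | succ n ih =>
        have hst : ρ (pre β (n+1)) = .l1 ∨ ρ (pre β (n+1)) = .l0 := by
          rcases fin2_cases (β n) with h1 | h1
          · rw [ih.2, h1, if_pos rfl]; exact Or.inl rfl
          · rw [ih.2, h1, if_neg (by decide)]; exact Or.inr rfl
        refine ⟨hst, ?_⟩
        have hd := hstep (pre β (n+1))
        rw [hlab (n+1)] at hd
        rw [pre_succ β (n+1)]
        rcases hst with h1 | h1 <;> rw [h1] at hd <;>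
          rcases fin2_cases (β (n+1)) with h2 | h2
        · rw [h2, if_pos rfl]; exact hd.1
        · rw [h2, if_neg (by decide)]; exact hd.2
        · rw [h2, if_pos rfl]; exact hd.1
        · rw [h2, if_neg (by decide)]; exact hd.2
  refine not_parityOk (r := 1) (N := 0) (by decide) (fun m => ?_) (fun n _ => ?_)
    (hpar β)
  · obtain ⟨n, hn, hb⟩ := hz m
    refine ⟨n + 1, by omega, ?_⟩
    show rankC (ρ (pre β (n+1))) = 1
    rw [(key n).2, hb]
    rfl
  · show rankC (ρ (pre β n)) ≤ 1
    rcases (key n).1 with h1 | h1 <;> rw [h1] <;> decide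
/-! ### The `A_G` component -/

theorem Gset_sub {s : Tree4} {β : ℕ → Fin 2} (hl : ∀ n, s (pre β n) = A4.la)
    (hz : ∀ m, ∃ n ≥ m, β n = 0) (j : ℕ) : Gset (subt s (pre β j)) := by
  refine ⟨fun i => β (j + i), fun n => ?_, fun m => ?_⟩
  · show s (pre β j ++ pre (fun i => β (j + i)) n) = A4.la
    rw [← pre_add]
    exact hl (j + n)
  · obtain ⟨n, hn, hb⟩ := hz (j + m)
    refine ⟨n - j, by omega, ?_⟩
    show β (j + (n - j)) = 0
    rwa [show j + (n - j) = n by omega]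

theorem g1_accepts {t : Tree4} (h : Gset t) : AcceptsFrom .g1 t := by
  classical
  set γd : List (Fin 2) → Fin 2 :=
    fun w => if Gset (subt t (w ++ [0])) then 0 else 1 with hγd
  set W : ℕ → List (Fin 2) := fun k => Nat.rec [] (fun _ w => w ++ [γd w]) k with hWdef
  have hWs : ∀ k, W (k+1) = W k ++ [γd (W k)] := fun k => rfl
  set γ : ℕ → Fin 2 := fun k => γd (W k) with hγ
  have hpre : ∀ k, pre γ k = W k := by
    intro k
    induction k with
    | zero => rfl
    | succ k ih => rw [pre_succ, ih, hWs]
  have hGk : ∀ k, Gset (subt t (W k)) := by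
    intro k
    induction k with
    | zero => exact h
    | succ k ih =>
        rw [hWs]
        by_cases hg : Gset (subt t (W k ++ [0]))
        · have he : γd (W k) = 0 := if_pos hg
          rw [he]
          exact hg
        · have he : γd (W k) = 1 := if_neg hg
          rw [he]
          have h2 : ¬ Gset (subt (subt t (W k)) [0]) := by rwa [subt_subt]
          have h3 := Gset_step ih h2
          rwa [subt_subt] at h3
  have hlab : ∀ k, t (W k) = A4.la := by
    intro k
    have := Gset_root (hGk k)
    rwa [subt_apply, List.append_nil] at this
  -- infinitely many left turns
  have hinf : ∀ m, ∃ k ≥ m, γ k = 0 := by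
    intro m
    by_contra hc
    push_neg at hc
    have h1 : ∀ k ≥ m, γ k = 1 := by
      intro k hk
      rcases fin2_cases (γ k) with h' | h'
      · exact absurd h' (hc k hk)
      · exact h'
    obtain ⟨β, hbl, hbz⟩ := hGk m
    have hWr : ∀ j, W (m + j) = W m ++ List.replicate j 1 := by
      intro j
      induction j with
      | zero => simp
      | succ j ih =>
          rw [show m + (j+1) = (m+j) + 1 from rfl, hWs, ih]
          have he : γd (W m ++ List.replicate j 1) = 1 := by
            rw [← ih]
            exact h1 (m+j) (by omega)
          rw [he, List.append_assoc, ← List.replicate_succ']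
    have hC : ∀ j, pre β j = List.replicate j 1 := by
      intro j
      induction j with
      | zero => rfl
      | succ j ih =>
          have hbj : β j = 1 := by
            rcases fin2_cases (β j) with h' | h'
            · exfalso
              have hg : Gset (subt (subt t (W m)) (pre β (j+1))) := Gset_sub hbl hbz (j+1)
              rw [pre_succ, ih, h', subt_subt, ← List.append_assoc, ← hWr j] at hg
              have : γ (m+j) = 0 := if_pos hg
              rw [h1 (m+j) (by omega)] at this
              exact absurd this (by decide)
            · exact h'
          rw [pre_succ, ih, hbj, ← List.replicate_succ']
    obtain ⟨n, -, hb0⟩ := hbz 0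
    have h2 := hC (n+1)
    rw [pre_succ, hC n, List.replicate_succ'] at h2
    have h3 : [β n] = [(1 : Fin 2)] := by
      first
      | exact List.append_cancel_left h2
      | exact List.append_left_cancel h2
    have h4 : β n = 1 := by simpa using h3
    rw [hb0] at h4
    exact absurd h4 (by decide)
  -- glue
  set F : ℕ → QC := fun k => Nat.rec QC.g1 (fun j _ => if γ j = 0 then QC.g2 else QC.g1) k
    with hF
  have hF0 : F 0 = .g1 := rfl
  have hFs : ∀ k, F (k+1) = if γ k = 0 then QC.g2 else QC.g1 := fun k => rfl
  set G : ℕ → QC := fun k => if γ k = 0 then QC.top2 else QC.l1 with hG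
  have hFmem : ∀ k, F k = .g1 ∨ F k = .g2 := by
    intro k
    cases k with
    | zero => exact Or.inl rfl
    | succ k =>
        rw [hFs]
        rcases fin2_cases (γ k) with h' | h'
        · rw [if_pos h']; exact Or.inr rfl
        · rw [if_neg (by rw [h']; decide)]; exact Or.inl rfl
  suffices hmain : AcceptsFrom (F 0) t by rwa [hF0] at hmain
  refine glueBranch γ F G ?_ ?_ ?_
  · intro k
    have hl : t (pre γ k) = A4.la := by rw [hpre]; exact hlab k
    rw [hl]
    rcases fin2_cases (γ k) with h' | h'
    · have e1 : (if γ k = 0 then F (k+1) else G k) = QC.g2 := by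
        rw [if_pos h', hFs, if_pos h']
      have e2 : (if γ k = 0 then G k else F (k+1)) = QC.top2 := by
        rw [if_pos h', hG]
        simp only
        rw [if_pos h']
      rw [e1, e2]
      rcases hFmem k with h'' | h'' <;> rw [h''] <;> exact Or.inl ⟨rfl, rfl⟩
    · have h'ne : ¬ (γ k = 0) := by rw [h']; decide
      have e1 : (if γ k = 0 then F (k+1) else G k) = QC.l1 := by
        rw [if_neg h'ne, hG]
        simp only
        rw [if_neg h'ne]
      have e2 : (if γ k = 0 then G k else F (k+1)) = QC.g1 := by
        rw [if_neg h'ne, hFs, if_neg h'ne]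
      rw [e1, e2]
      rcases hFmem k with h'' | h'' <;> rw [h''] <;> exact Or.inr ⟨rfl, rfl⟩
  · intro k
    rcases fin2_cases (γ k) with h' | h'
    · have e : G k = .top2 := by rw [hG]; simp only; rw [if_pos h']
      rw [e]
      exact top2_accepts _
    · have h'ne : ¬ (γ k = 0) := by rw [h']; decide
      have e : G k = .l1 := by rw [hG]; simp only; rw [if_neg h'ne]
      rw [e]
      apply l1_accepts
      have : oth (γ k) = 0 := by rw [h']; rfl
      rw [this, hpre]
      intro hg
      have : γ k = 0 := if_pos hg
      exact h'ne this
  · refine parityOk_of_le (r := 2) (N := 0) (by decide) ?_ ?_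
    · intro m
      obtain ⟨k, hk, hk0⟩ := hinf m
      refine ⟨k + 1, by omega, ?_⟩
      show rankC (F (k+1)) = 2
      rw [hFs, if_pos hk0]
      rfl
    · intro n _
      show rankC (F n) ≤ 2
      rcases hFmem n with h' | h' <;> rw [h'] <;> decide

theorem g1_rejects {t : Tree4} (h : ¬ Gset t) : ¬ AcceptsFrom .g1 t := by
  classical
  rintro ⟨ρ, hacc⟩
  have h0 : ρ [] = .g1 := hacc.1.1
  have hstep := hacc.1.2
  have hpar := hacc.2
  set γd : List (Fin 2) → Fin 2 := fun w => if ρ (w ++ [1]) = .g1 then 1 else 0 with hγd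
  set W : ℕ → List (Fin 2) := fun k => Nat.rec [] (fun _ w => w ++ [γd w]) k with hWdef
  have hWs : ∀ k, W (k+1) = W k ++ [γd (W k)] := fun k => rfl
  set γ : ℕ → Fin 2 := fun k => γd (W k) with hγ
  have hpre : ∀ k, pre γ k = W k := by
    intro k
    induction k with
    | zero => rfl
    | succ k ih => rw [pre_succ, ih, hWs]
  have hkey : ∀ k, (ρ (W k) = .g1 ∨ ρ (W k) = .g2) →
      t (W k) = A4.la ∧ ρ (W (k+1)) = (if γ k = 0 then QC.g2 else QC.g1) := by
    intro k hk
    have hlab : t (W k) = A4.la := by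
      by_contra hc
      have hd := hstep (W k)
      have hb : ρ (W k ++ [0]) = .bot1 := by
        rcases hk with h' | h' <;> rw [h'] at hd <;>
          cases ht : t (W k) <;> rw [ht] at hd <;>
            first | (exact absurd ht hc) | exact hd.1
      exact run_ne_bot1 hacc (W k ++ [0]) hb
    refine ⟨hlab, ?_⟩
    have hd := hstep (W k)
    rw [hlab] at hd
    have hd' : (ρ (W k ++ [0]) = .g2 ∧ ρ (W k ++ [1]) = .top2) ∨
        (ρ (W k ++ [0]) = .l1 ∧ ρ (W k ++ [1]) = .g1) := by
      rcases hk with h' | h' <;> rw [h'] at hd <;> exact hd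
    rcases hd' with ⟨e0, e1⟩ | ⟨e0, e1⟩
    · have hg : γ k = 0 := by
        show γd (W k) = 0
        rw [hγd]
        simp only
        rw [if_neg (by rw [e1]; decide)]
      rw [hg, if_pos rfl, hWs, show γd (W k) = (0 : Fin 2) from hg]
      exact e0
    · have hg : γ k = 1 := by
        show γd (W k) = 1
        rw [hγd]
        simp only
        rw [if_pos e1]
      rw [hg, if_neg (by decide), hWs, show γd (W k) = (1 : Fin 2) from hg]
      exact e1
  have hmain : ∀ k, ρ (W k) = .g1 ∨ ρ (W k) = .g2 := by
    intro k
    induction k with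
    | zero => exact Or.inl h0
    | succ k ih =>
        rw [(hkey k ih).2]
        rcases fin2_cases (γ k) with h' | h'
        · rw [if_pos h']; exact Or.inr rfl
        · rw [if_neg (by rw [h']; decide)]; exact Or.inl rfl
  have hlab : ∀ k, t (pre γ k) = A4.la := by
    intro k
    rw [hpre]
    exact (hkey k (hmain k)).1
  have hz : ¬ (∀ m, ∃ n ≥ m, γ n = 0) := fun hz => h ⟨γ, hlab, hz⟩
  push_neg at hz
  obtain ⟨m, hm⟩ := hz
  have hone : ∀ k ≥ m, γ k = 1 := by
    intro k hk
    rcases fin2_cases (γ k) with h' | h'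
    · exact absurd h' (hm k hk)
    · exact h'
  have hg1 : ∀ k ≥ m + 1, ρ (W k) = .g1 := by
    intro k hk
    obtain ⟨k', rfl⟩ : ∃ k', k = k' + 1 := ⟨k - 1, by omega⟩
    rw [(hkey k' (hmain k')).2, if_neg (by rw [hone k' (by omega)]; decide)]
  refine not_parityOk (r := 1) (N := m + 1) (by decide) (fun m' => ?_) (fun n hn => ?_)
    (hpar γ)
  · refine ⟨max (m+1) m', le_max_right _ _, ?_⟩
    show rankC (ρ (pre γ (max (m+1) m'))) = 1
    rw [hpre, hg1 _ (le_max_left _ _)]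
    rfl
  · show rankC (ρ (pre γ n)) ≤ 1
    rw [hpre, hg1 n hn]
    decide
/-! ### Structural lemmas about `Wbad` -/

def consB (d : Fin 2) (β : ℕ → Fin 2) : ℕ → Fin 2 :=
  fun n => match n with | 0 => d | n+1 => β n

theorem pre_consB (d : Fin 2) (β : ℕ → Fin 2) (n : ℕ) :
    pre (consB d β) (n+1) = d :: pre β n := by
  rw [pre_cons]
  rfl

theorem wlift {t : Tree4} {d : Fin 2} (hl : t [] = A4.lor ∨ t [] = A4.lneg)
    (hd : t [] = A4.lneg → d = 1) (h : subt t [d] ∈ Wbad) : t ∈ Wbad := by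
  rcases h with ⟨β, h1, h2, h3⟩ | ⟨w, h1, h2, h3, h4⟩
  · left
    refine ⟨consB d β, fun n => ?_, fun m => ?_, fun n => ?_⟩
    · cases n with
      | zero => exact hl
      | succ n => rw [pre_consB]; exact h1 n
    · obtain ⟨n, hn, hb⟩ := h2 m
      exact ⟨n+1, by omega, hb⟩
    · cases n with
      | zero => exact hd
      | succ n => rw [pre_consB]; exact h3 n
  · right
    refine ⟨d :: w, ?_, ?_, ?_, ?_⟩
    · exact h1
    · exact h2
    · intro u hu
      rcases u with _ | ⟨e, u⟩
      · exact hl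
      · rw [List.cons_prefix_cons] at hu
        obtain ⟨rfl, hu⟩ := hu
        exact h3 u hu
    · intro u e hu hneg
      rcases u with _ | ⟨e', u⟩
      · rw [show (([] : List (Fin 2)) ++ [e]) = [e] from rfl,
            show ((d::w) ++ [(0 : Fin 2)]) = d :: (w ++ [0]) from rfl,
            List.cons_prefix_cons] at hu
        obtain ⟨rfl, -⟩ := hu
        exact hd hneg
      · rw [show ((e'::u) ++ [e] : List (Fin 2)) = e' :: (u ++ [e]) from rfl,
            show ((d::w) ++ [(0 : Fin 2)]) = d :: (w ++ [0]) from rfl,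
            List.cons_prefix_cons] at hu
        obtain ⟨rfl, hu⟩ := hu
        exact h4 u e hu hneg

theorem notW_child {t : Tree4} (h : t ∉ Wbad) {d : Fin 2}
    (hl : t [] = A4.lor ∨ t [] = A4.lneg) (hd : t [] = A4.lneg → d = 1) :
    subt t [d] ∉ Wbad := fun hW => h (wlift hl hd hW)

theorem notW_left_lor {t : Tree4} (h : t ∉ Wbad) (hl : t [] = A4.lor) :
    t [0] = A4.lor := by
  by_contra hc
  apply h
  right
  refine ⟨[], ?_, hl, ?_, ?_⟩
  · simpa using hc
  · intro u hu
    rw [List.prefix_nil] at hu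
    subst hu
    exact Or.inl hl
  · intro u e hu hneg
    have hlen := hu.length_le
    simp only [List.length_append, List.length_cons, List.length_nil] at hlen
    have hu0 : u = [] := List.eq_nil_of_length_eq_zero (by omega)
    subst hu0
    rw [hl] at hneg
    exact absurd hneg (by decide)

theorem notW_spine_lor {t : Tree4} (h : t ∉ Wbad) (hl : t [] = A4.lor) :
    ∀ k, t (List.replicate k 0) = A4.lor ∧ subt t (List.replicate k 0) ∉ Wbad := by
  intro k
  induction k with
  | zero => exact ⟨hl, h⟩
  | succ k ih =>
      obtain ⟨hk, hWk⟩ := ih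
      have hs : subt t (List.replicate k 0) [] = A4.lor := by
        rw [subt_apply, List.append_nil]
        exact hk
      constructor
      · have := notW_left_lor hWk hs
        rw [subt_apply] at this
        rwa [List.replicate_succ']
      · have hsub := notW_child hWk (d := 0) (Or.inl hs)
          (fun hx => absurd hx (by rw [hs]; decide))
        rw [subt_subt, ← List.replicate_succ'] at hsub
        exact hsub

theorem notW_disjunct {t : Tree4} (h : t ∉ Wbad) (hl : t [] = A4.lor) (k : ℕ) :
    subt t (List.replicate k 0 ++ [1]) ∉ Wbad := by
  obtain ⟨hk, hWk⟩ := notW_spine_lor h hl k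
  have hs : subt t (List.replicate k 0) [] = A4.lor := by
    rw [subt_apply, List.append_nil]
    exact hk
  have := notW_child hWk (d := 1) (Or.inl hs) (fun _ => rfl)
  rwa [subt_subt] at this

theorem notW_disjunct_lor {t : Tree4} (h : t ∉ Wbad) (hl : t [] = A4.lor) (k : ℕ) :
    subt t (List.replicate k 0 ++ [1]) [] = t (List.replicate k 0 ++ [1]) := by
  rw [subt_apply, List.append_nil]

theorem notW_neg_child {t : Tree4} (h : t ∉ Wbad) (hn : t [] = A4.lneg) :
    subt t [1] ∉ Wbad :=
  notW_child h (Or.inr hn) (fun _ => rfl)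
/-! ### Acceptance from `Tv` and `TS` -/

theorem prefix_snoc_iff {u v : List (Fin 2)} {d : Fin 2} :
    u <+: v ++ [d] ↔ u = v ++ [d] ∨ u <+: v := by
  constructor
  · intro h
    rcases Nat.lt_or_ge u.length (v ++ [d]).length with h1 | h1
    · right
      have hle : u.length ≤ v.length := by
        simp only [List.length_append, List.length_cons, List.length_nil] at h1
        omega
      exact (List.isPrefix_append_of_length hle).mp h
    · left
      exact List.IsPrefix.eq_of_length h (le_antisymm h.length_le h1)
  · rintro (rfl | h)
    · exact List.prefix_refl _
    · exact h.trans (List.prefix_append _ _)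

def stT : QC → A4 → Fin 2 → QC := fun q a d =>
  match q, a with
  | .TS, .lor | .Tv, .lor => if d = 0 then .Tv else .TS
  | .TS, .lneg => if d = 0 then .Top else .TS
  | _, _ => .Top

theorem stT_top (a : A4) (d : Fin 2) : stT .Top a d = .Top := by
  cases a <;> rfl

def FormPath (t : Tree4) (v : List (Fin 2)) : Prop :=
  (∀ u, u <+: v → u ≠ v → t u = A4.lor ∨ t u = A4.lneg) ∧
  (∀ (u : List (Fin 2)) (d : Fin 2), u ++ [d] <+: v → t u = A4.lneg → d = 1)

theorem formPath_nil (t : Tree4) : FormPath t [] := by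
  constructor
  · intro u hu hne
    rw [List.prefix_nil] at hu
    exact absurd hu hne
  · intro u d hu _
    have := hu.length_le
    simp at this

theorem formPath_snoc {t : Tree4} {v : List (Fin 2)} (h : FormPath t v) (d : Fin 2)
    (hl : t v = A4.lor ∨ t v = A4.lneg) (hd : t v = A4.lneg → d = 1) :
    FormPath t (v ++ [d]) := by
  constructor
  · intro u hu hne
    rcases prefix_snoc_iff.mp hu with h1 | h1
    · exact absurd h1 hne
    · by_cases he : u = v
      · subst he; exact hl
      · exact h.1 u h1 he
  · intro u e hu hneg
    rcases prefix_snoc_iff.mp hu with h1 | h1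
    · obtain ⟨rfl, h2⟩ := List.append_inj' h1 rfl
      have he : e = d := by simpa using h2
      subst he
      exact hd hneg
    · exact h.2 u e h1 hneg

/-- the parent clause in the invariant. -/
def TvOk (t : Tree4) (v : List (Fin 2)) : Prop :=
  (v = [] ∧ t [] = A4.lor) ∨ ∃ v', v = v' ++ [0] ∧ t v' = A4.lor

theorem TvOk_label {t : Tree4} (hW : t ∉ Wbad) {v : List (Fin 2)}
    (hfp : FormPath t v) (hok : TvOk t v) : t v = A4.lor := by
  rcases hok with ⟨rfl, hroot⟩ | ⟨v', rfl, hv'⟩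
  · exact hroot
  · by_contra hc
    apply hW
    right
    refine ⟨v', hc, hv', ?_, ?_⟩
    · intro u hu
      refine hfp.1 u (hu.trans (List.prefix_append _ _)) ?_
      intro he
      subst he
      have := hu.length_le
      simp at this
    · intro u e hu hneg
      exact hfp.2 u e hu hneg

theorem TvTS_accepts {t : Tree4} (hW : t ∉ Wbad) {q0 : QC}
    (hq : q0 = .TS ∨ (q0 = .Tv ∧ t [] = A4.lor)) : AcceptsFrom q0 t := by
  set σ : List (Fin 2) → QC := detRun stT t q0 with hσ
  have hsnoc : ∀ v d, σ (v ++ [d]) = stT (σ v) (t v) d := fun v d => detRun_snoc stT t q0 v d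
  -- the invariant
  have hInv : ∀ v, σ v = .Top ∨ ((σ v = .Tv ∨ σ v = .TS) ∧ FormPath t v ∧
      (σ v = .Tv → TvOk t v)) := by
    intro v
    induction v using List.reverseRecOn with
    | nil =>
        right
        have h0 : σ [] = q0 := rfl
        rcases hq with h1 | ⟨h1, h2⟩
        · rw [h0, h1]
          exact ⟨Or.inr rfl, formPath_nil t, fun h => by cases h⟩
        · rw [h0, h1]
          exact ⟨Or.inl rfl, formPath_nil t, fun _ => Or.inl ⟨rfl, h2⟩⟩
    | append_singleton v d ih =>
        rw [hsnoc]
        rcases ih with htop | ⟨hts, hfp, hok⟩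
        · rw [htop, stT_top]
          exact Or.inl rfl
        · have hcase : (σ v = .Tv ∧ t v = A4.lor) ∨ σ v = .TS := by
            rcases hts with h1 | h1
            · exact Or.inl ⟨h1, TvOk_label hW hfp (hok h1)⟩
            · exact Or.inr h1
          rcases hcase with ⟨h1, h2⟩ | h1
          · -- Tv at a lor node
            rw [h1, h2]
            rcases fin2_cases d with rfl | rfl
            · right
              refine ⟨Or.inl (by rw [stT]; rfl), formPath_snoc hfp 0 (Or.inl h2)
                (fun hx => absurd hx (by rw [h2]; decide)), fun _ => Or.inr ⟨v, rfl, h2⟩⟩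
            · right
              refine ⟨Or.inr (by rw [stT]; rfl), formPath_snoc hfp 1 (Or.inl h2)
                (fun _ => rfl), fun hx => ?_⟩
              rw [show stT QC.Tv A4.lor 1 = QC.TS from rfl] at hx
              cases hx
          · rw [h1]
            cases hlv : t v with
            | la => exact Or.inl rfl
            | lb => exact Or.inl rfl
            | lor =>
                rcases fin2_cases d with rfl | rfl
                · right
                  exact ⟨Or.inl rfl, formPath_snoc hfp 0 (Or.inl hlv)
                    (fun hx => absurd hx (by rw [hlv]; decide)), fun _ => Or.inr ⟨v, rfl, hlv⟩⟩
                · right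
                  refine ⟨Or.inr rfl, formPath_snoc hfp 1 (Or.inl hlv) (fun _ => rfl),
                    fun hx => ?_⟩
                  cases hx
            | lneg =>
                rcases fin2_cases d with rfl | rfl
                · exact Or.inl rfl
                · right
                  refine ⟨Or.inr rfl, formPath_snoc hfp 1 (Or.inr hlv) (fun _ => rfl),
                    fun hx => ?_⟩
                  cases hx
  have hTv_label : ∀ v, σ v = .Tv → t v = A4.lor := by
    intro v hv
    rcases hInv v with htop | ⟨_, hfp, hok⟩
    · rw [hv] at htop; cases htop
    · exact TvOk_label hW hfp (hok hv)
  refine ⟨σ, ⟨rfl, fun v => ?_⟩, fun β => ?_⟩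
  · -- validity
    rw [hsnoc, hsnoc]
    rcases hInv v with htop | ⟨hts, -, -⟩
    · rw [htop]
      cases t v <;> exact ⟨rfl, rfl⟩
    · rcases hts with h1 | h1
      · rw [h1, hTv_label v h1]
        exact ⟨rfl, rfl⟩
      · rw [h1]
        cases t v <;> exact ⟨rfl, rfl⟩
  · -- parity
    set q : ℕ → QC := fun n => σ (pre β n) with hqdef
    have hstepb : ∀ n, q (n+1) = stT (q n) (t (pre β n)) (β n) := by
      intro n
      show σ (pre β (n+1)) = _
      rw [pre_succ, hsnoc]
    by_cases htop : ∃ n0, q n0 = .Top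
    · obtain ⟨n0, h0⟩ := htop
      have hmono : ∀ n ≥ n0, q n = .Top := by
        intro n hn
        induction n with
        | zero => exact (Nat.le_zero.mp hn) ▸ h0
        | succ n ih =>
            rcases Nat.lt_or_ge n0 (n+1) with h1 | h1
            · rw [hstepb n, ih (by omega), stT_top]
            · have he : n0 = n + 1 := by omega
              rw [← he]; exact h0
      exact parityOk_of_eventually (N := n0) (fun n hn => by
        show rankC (q n) = 0
        rw [hmono n hn]; rfl)
    · push_neg at htop
      have hmem : ∀ n, q n = .Tv ∨ q n = .TS := by
        intro n
        rcases hInv (pre β n) with h1 | ⟨h1, -, -⟩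
        · exact absurd h1 (htop n)
        · exact h1
      by_cases hTSinf : ∀ m, ∃ n ≥ m, q n = .TS
      · -- build a Wbad witness: contradiction
        exfalso
        apply hW
        left
        refine ⟨β, fun n => ?_, fun m => ?_, fun n => ?_⟩
        · -- labels
          rcases hmem n with h1 | h1
          · exact Or.inl (hTv_label _ h1)
          · cases hlv : t (pre β n) with
            | lor => exact Or.inl rfl
            | lneg => exact Or.inr rfl
            | la =>
                exfalso
                apply htop (n+1)
                rw [hstepb n, h1, hlv]
                rfl
            | lb =>
                exfalso
                apply htop (n+1)
                rw [hstepb n, h1, hlv]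
                rfl
        · -- infinitely many right turns
          obtain ⟨n, hn, hTS⟩ := hTSinf (m+1)
          obtain ⟨n', rfl⟩ : ∃ n', n = n' + 1 := ⟨n - 1, by omega⟩
          refine ⟨n', by omega, ?_⟩
          rw [hstepb n'] at hTS
          by_contra hb
          have hb0 : β n' = 0 := by
            rcases fin2_cases (β n') with h2 | h2
            · exact h2
            · exact absurd h2 hb
          rw [hb0] at hTS
          rcases hmem n' with h1 | h1 <;> rw [h1] at hTS <;>
            cases hlv : t (pre β n') <;> rw [hlv] at hTS <;>
              first
                | exact absurd hTS (by decide)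
                | (exact absurd ((hTv_label _ h1).symm.trans hlv) (by decide))
        · -- right after negation
          intro hneg
          rcases hmem n with h1 | h1
          · exact absurd ((hTv_label _ h1).symm.trans hneg) (by decide)
          · rcases fin2_cases (β n) with h2 | h2
            · exfalso
              apply htop (n+1)
              rw [hstepb n, h1, hneg, h2]
              rfl
            · exact h2
      · -- eventually Tv forever
        push_neg at hTSinf
        obtain ⟨m, hm⟩ := hTSinf
        refine parityOk_of_eventually (N := m) (fun n hn => ?_)
        show rankC (q n) = 0
        rcases hmem n with h1 | h1
        · rw [h1]; rfl
        · exact absurd h1 (hm n hn)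
/-! ### No tree in `Wbad` is accepted from `P` or `N` -/

def Fset (q : QC) : Prop :=
  q = .P ∨ q = .N ∨ q = .Pv ∨ q = .Nv ∨ q = .Tv ∨ q = .TS

theorem Wbad_rejects {t : Tree4} (hW : t ∈ Wbad) {q0 : QC}
    (hq : q0 = .P ∨ q0 = .N) : ¬ AcceptsFrom q0 t := by
  rintro ⟨ρ, ⟨h0, hstep⟩, hpar⟩
  have hF0 : Fset (ρ []) := by
    rcases hq with h | h
    · exact Or.inl (h0.trans h)
    · exact Or.inr (Or.inl (h0.trans h))
  rcases hW with ⟨β, hlab, hinf, hneg⟩ | ⟨w, h1, h2, h3, h4⟩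
  · -- an infinite bad branch
    have step1 : ∀ n, Fset (ρ (pre β n)) →
        Fset (ρ (pre β (n+1))) ∧ (β n = 1 → rankC (ρ (pre β (n+1))) = 1) := by
      intro n hF
      have hd := hstep (pre β n)
      rw [pre_succ]
      rcases hlab n with hl | hl
      · rw [hl] at hd
        rcases hF with h | h | h | h | h | h <;> rw [h] at hd
        · rcases hd with ⟨e0, e1⟩ | ⟨e0, e1⟩ <;>
            rcases fin2_cases (β n) with hb | hb <;> rw [hb] <;>
              constructor <;>
                first
                  | (intro _; rw [e1]; rfl)
                  | (intro hx; exact absurd hx (by decide))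
                  | (rw [e0]; simp [Fset])
                  | (rw [e1]; simp [Fset])
        · obtain ⟨e0, e1⟩ := hd
          rcases fin2_cases (β n) with hb | hb <;> rw [hb] <;> constructor <;>
            first
              | (intro _; rw [e1]; rfl)
              | (intro hx; exact absurd hx (by decide))
              | (rw [e0]; simp [Fset])
              | (rw [e1]; simp [Fset])
        · rcases hd with ⟨e0, e1⟩ | ⟨e0, e1⟩ <;>
            rcases fin2_cases (β n) with hb | hb <;> rw [hb] <;>
              constructor <;>
                first
                  | (intro _; rw [e1]; rfl)
                  | (intro hx; exact absurd hx (by decide))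
                  | (rw [e0]; simp [Fset])
                  | (rw [e1]; simp [Fset])
        · obtain ⟨e0, e1⟩ := hd
          rcases fin2_cases (β n) with hb | hb <;> rw [hb] <;> constructor <;>
            first
              | (intro _; rw [e1]; rfl)
              | (intro hx; exact absurd hx (by decide))
              | (rw [e0]; simp [Fset])
              | (rw [e1]; simp [Fset])
        · obtain ⟨e0, e1⟩ := hd
          rcases fin2_cases (β n) with hb | hb <;> rw [hb] <;> constructor <;>
            first
              | (intro _; rw [e1]; rfl)
              | (intro hx; exact absurd hx (by decide))
              | (rw [e0]; simp [Fset])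
              | (rw [e1]; simp [Fset])
        · obtain ⟨e0, e1⟩ := hd
          rcases fin2_cases (β n) with hb | hb <;> rw [hb] <;> constructor <;>
            first
              | (intro _; rw [e1]; rfl)
              | (intro hx; exact absurd hx (by decide))
              | (rw [e0]; simp [Fset])
              | (rw [e1]; simp [Fset])
      · -- a negation node: the branch must turn right
        have hb1 : β n = 1 := hneg n hl
        rw [hl] at hd
        rw [hb1]
        rcases hF with h | h | h | h | h | h <;> rw [h] at hd
        · exact ⟨Or.inr (Or.inl hd.2), fun _ => by rw [hd.2]; rfl⟩
        · exact ⟨Or.inl hd.2, fun _ => by rw [hd.2]; rfl⟩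
        · exact hd.elim
        · exact hd.elim
        · exact hd.elim
        · exact ⟨Or.inr (Or.inr (Or.inr (Or.inr (Or.inr hd.2)))), fun _ => by rw [hd.2]; rfl⟩
    have Finv : ∀ n, Fset (ρ (pre β n)) := by
      intro n
      induction n with
      | zero => exact hF0
      | succ n ih => exact (step1 n ih).1
    refine not_parityOk (r := 1) (N := 0) (by decide) (fun m => ?_) (fun n _ => ?_) (hpar β)
    · obtain ⟨n, hn, hb⟩ := hinf m
      exact ⟨n + 1, by omega, (step1 n (Finv n)).2 hb⟩
    · show rankC (ρ (pre β n)) ≤ 1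
      rcases Finv n with h | h | h | h | h | h <;> rw [h] <;> decide
  · -- a bad finite path
    have key : ∀ k, k ≤ w.length → Fset (ρ (w.take k)) := by
      intro k
      induction k with
      | zero => intro _; exact hF0
      | succ k ih =>
          intro hk
          have hklt : k < w.length := by omega
          have htake : w.take (k+1) = w.take k ++ [w[k]] := by
            rw [List.take_succ, List.getElem?_eq_getElem hklt]
            rfl
          have hpref : w.take k <+: w := List.take_prefix k w
          have hF := ih (by omega)
          have hd := hstep (w.take k)
          have hdir : t (w.take k) = A4.lneg → w[k] = 1 := by
            intro hneg
            refine h4 (w.take k) (w[k]) ?_ hneg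
            rw [← htake]
            exact (List.take_prefix (k+1) w).trans (List.prefix_append _ _)
          rw [htake]
          rcases h3 (w.take k) hpref with hl | hl <;> rw [hl] at hd <;>
            rcases hF with h | h | h | h | h | h <;> rw [h] at hd
          · rcases hd with ⟨e0, e1⟩ | ⟨e0, e1⟩ <;>
              rcases fin2_cases (w[k]) with hb | hb <;> rw [hb] <;>
                first
                  | (rw [e0]; simp [Fset])
                  | (rw [e1]; simp [Fset])
          · obtain ⟨e0, e1⟩ := hd
            rcases fin2_cases (w[k]) with hb | hb <;> rw [hb] <;>
              first
                | (rw [e0]; simp [Fset])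
                | (rw [e1]; simp [Fset])
          · rcases hd with ⟨e0, e1⟩ | ⟨e0, e1⟩ <;>
              rcases fin2_cases (w[k]) with hb | hb <;> rw [hb] <;>
                first
                  | (rw [e0]; simp [Fset])
                  | (rw [e1]; simp [Fset])
          · obtain ⟨e0, e1⟩ := hd
            rcases fin2_cases (w[k]) with hb | hb <;> rw [hb] <;>
              first
                | (rw [e0]; simp [Fset])
                | (rw [e1]; simp [Fset])
          · obtain ⟨e0, e1⟩ := hd
            rcases fin2_cases (w[k]) with hb | hb <;> rw [hb] <;>
              first
                | (rw [e0]; simp [Fset])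
                | (rw [e1]; simp [Fset])
          · obtain ⟨e0, e1⟩ := hd
            rcases fin2_cases (w[k]) with hb | hb <;> rw [hb] <;>
              first
                | (rw [e0]; simp [Fset])
                | (rw [e1]; simp [Fset])
          · rw [hdir hl, hd.2]
            simp [Fset]
          · rw [hdir hl, hd.2]
            simp [Fset]
          · exact hd.elim
          · exact hd.elim
          · exact hd.elim
          · rw [hdir hl, hd.2]
            simp [Fset]
    have hFw : Fset (ρ w) := by
      have := key w.length (le_refl _)
      rwa [List.take_length] at this
    have hd := hstep w
    rw [h2] at hd
    have hL : ρ (w ++ [0]) = .Tv ∨ ρ (w ++ [0]) = .Pv ∨ ρ (w ++ [0]) = .Nv := by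
      rcases hFw with h | h | h | h | h | h <;> rw [h] at hd
      · rcases hd with ⟨e0, -⟩ | ⟨e0, -⟩
        · exact Or.inl e0
        · exact Or.inr (Or.inl e0)
      · exact Or.inr (Or.inr hd.1)
      · rcases hd with ⟨e0, -⟩ | ⟨e0, -⟩
        · exact Or.inl e0
        · exact Or.inr (Or.inl e0)
      · exact Or.inr (Or.inr hd.1)
      · exact Or.inl hd.1
      · exact Or.inl hd.1
    have hd2 := hstep (w ++ [0])
    cases hlv : t (w ++ [0]) with
    | lor => exact h1 hlv
    | la =>
        rw [hlv] at hd2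
        rcases hL with h | h | h <;> rw [h] at hd2 <;> exact hd2
    | lb =>
        rw [hlv] at hd2
        rcases hL with h | h | h <;> rw [h] at hd2 <;> exact hd2
    | lneg =>
        rw [hlv] at hd2
        rcases hL with h | h | h <;> rw [h] at hd2 <;> exact hd2
/-! ### The subformula step relation and its accessibility -/

def FStep (t : Tree4) (w : List (Fin 2)) : Prop :=
  (t [] = A4.lneg ∧ w = [1]) ∨
  (∃ n, w = List.replicate n 0 ++ [1] ∧ ∀ k ≤ n, t (List.replicate k 0) = A4.lor)

def Step (s t : Tree4) : Prop := ∃ w, FStep t w ∧ s = subt t w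

theorem prefix_getD {u v : List (Fin 2)} (h : u <+: v) {m : ℕ} (hm : m < u.length) :
    u.getD m 0 = v.getD m 0 := by
  rw [List.getD_eq_getElem u 0 hm,
    List.getD_eq_getElem v 0 (lt_of_lt_of_le hm h.length_le)]
  exact h.getElem hm

theorem acc_step_of_notW {t : Tree4} (hW : t ∉ Wbad) : Acc Step t := by
  classical
  by_contra h
  apply hW
  have hex : ∀ s : Tree4, ¬ Acc Step s → ∃ s', Step s' s ∧ ¬ Acc Step s' := by
    intro s hs
    by_contra hc
    push_neg at hc
    exact hs (Acc.intro s (fun y hy => hc y hy))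
  let f : ℕ → {s : Tree4 // ¬ Acc Step s} := fun n =>
    Nat.rec ⟨t, h⟩ (fun _ p =>
      ⟨Classical.choose (hex p.1 p.2), (Classical.choose_spec (hex p.1 p.2)).2⟩) n
  have hchain : ∀ n, Step (f (n+1)).1 (f n).1 :=
    fun n => (Classical.choose_spec (hex (f n).1 (f n).2)).1
  choose w hF hE using hchain
  have hshape : ∀ n, ∃ a, w n = List.replicate a 0 ++ [1] ∧
      ((a = 0 ∧ (f n).1 [] = A4.lneg) ∨
       (∀ k ≤ a, (f n).1 (List.replicate k 0) = A4.lor)) := by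
    intro n
    rcases hF n with ⟨hneg, hw⟩ | ⟨a, hw, hlabs⟩
    · exact ⟨0, by rw [hw]; rfl, Or.inl ⟨rfl, hneg⟩⟩
    · exact ⟨a, hw, Or.inr hlabs⟩
  choose a ha hcase using hshape
  let p : ℕ → List (Fin 2) := fun n => Nat.rec [] (fun k acc => acc ++ w k) n
  have hp0 : p 0 = [] := rfl
  have hps : ∀ n, p (n+1) = p n ++ w n := fun n => rfl
  have hsubt : ∀ n, (f n).1 = subt t (p n) := by
    intro n
    induction n with
    | zero => rfl
    | succ n ih => rw [hps, hE n, ih, subt_subt]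
  have hplen : ∀ n, (p (n+1)).length = (p n).length + (a n + 1) := by
    intro n
    rw [hps, List.length_append, ha n, List.length_append, List.length_replicate]
    rfl
  have hpge : ∀ n, n ≤ (p n).length := by
    intro n
    induction n with
    | zero => omega
    | succ n ih => have := hplen n; omega
  have hprefix : ∀ m n, m ≤ n → p m <+: p n := by
    intro m n hmn
    induction n with
    | zero => rw [Nat.le_zero.mp hmn]
    | succ n ih =>
        rcases Nat.lt_or_ge m (n+1) with h1 | h1
        · exact (ih (by omega)).trans (by rw [hps]; exact List.prefix_append _ _)
        · have he : m = n+1 := by omega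
          rw [he]
  set β : ℕ → Fin 2 := fun m => (p (m+1)).getD m 0 with hβ
  have hagree : ∀ n m, m < (p n).length → (p n).getD m 0 = β m := by
    intro n m hm
    have hm1 : m < (p (m+1)).length := lt_of_lt_of_le (by omega) (hpge (m+1))
    rcases Nat.le_total n (m+1) with h1 | h1
    · exact prefix_getD (hprefix n (m+1) h1) hm
    · exact (prefix_getD (hprefix (m+1) n h1) hm1).symm
  have hpre : ∀ n m, m ≤ (p n).length → pre β m = (p n).take m := by
    intro n m hm
    apply List.ext_getElem (by simp [pre_length]; omega)
    intro i h1 h2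
    have hi : i < m := by simpa [pre_length] using h1
    rw [pre_getElem _ _ _ hi, List.getElem_take]
    have hilen : i < (p n).length := by omega
    rw [← hagree n i hilen, List.getD_eq_getElem (p n) 0 hilen]
  have hnode : ∀ n j, j ≤ a n → pre β ((p n).length + j) = p n ++ List.replicate j 0 := by
    intro n j hj
    have hle : (p n).length + j ≤ (p (n+1)).length := by rw [hplen]; omega
    rw [hpre (n+1) _ hle, hps, ha n, List.take_length_add_append]
    congr 1
    rw [List.take_append_of_le_length (by rw [List.length_replicate]; exact hj),
      List.take_replicate]
    congr 1
    exact min_eq_left hj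
  have hlast : ∀ n, β ((p n).length + a n) = 1 := by
    intro n
    have hfull : pre β ((p n).length + (a n + 1)) =
        (p n ++ List.replicate (a n) 0) ++ [1] := by
      have hle : (p n).length + (a n + 1) ≤ (p (n+1)).length := by rw [hplen]
      rw [hpre (n+1) _ hle, hps, ha n, ← List.append_assoc]
      have hlen2 : (p n ++ List.replicate (a n) 0).length + 1 =
          (p n).length + (a n + 1) := by
        simp only [List.length_append, List.length_replicate]
        omega
      rw [← hlen2, List.take_length_add_append]
      rfl
    rw [show (p n).length + (a n + 1) = ((p n).length + a n) + 1 from rfl,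
      pre_succ, hnode n (a n) (le_refl _)] at hfull
    have h2 := (List.append_inj' hfull rfl).2
    simpa using h2
  have hdecomp : ∀ m, ∃ n j, j ≤ a n ∧ m = (p n).length + j := by
    intro m
    induction m with
    | zero => exact ⟨0, 0, by omega, by simp [hp0]⟩
    | succ m ih =>
        obtain ⟨n, j, hj, hm⟩ := ih
        rcases Nat.lt_or_ge j (a n) with h1 | h1
        · exact ⟨n, j+1, by omega, by omega⟩
        · refine ⟨n+1, 0, by omega, ?_⟩
          rw [hplen]
          omega
  refine Or.inl ⟨β, fun m => ?_, fun m => ?_, fun m => ?_⟩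
  · obtain ⟨n, j, hj, rfl⟩ := hdecomp m
    rw [hnode n j hj]
    rcases hcase n with ⟨ha0, hneg⟩ | hlor
    · have hj0 : j = 0 := by omega
      subst hj0
      right
      rw [hsubt n, subt_apply] at hneg
      simpa using hneg
    · left
      have hl := hlor j hj
      rw [hsubt n, subt_apply] at hl
      exact hl
  · exact ⟨(p m).length + a m, by have := hpge m; omega, hlast m⟩
  · intro hneg
    obtain ⟨n, j, hj, rfl⟩ := hdecomp m
    rcases hcase n with ⟨ha0, hnegl⟩ | hlor
    · have hj0 : j = 0 := by omega
      subst hj0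
      have hl := hlast n
      rw [ha0] at hl
      exact hl
    · exfalso
      have hl := hlor j hj
      rw [hsubt n, subt_apply] at hl
      rw [hnode n j hj, hl] at hneg
      exact absurd hneg (by decide)
/-! ### Root-state lemmas -/

theorem accepts_P_a {t : Tree4} (ht : t [] = A4.la) :
    AcceptsFrom .P t ↔ AcceptsFrom .g1 t :=
  ⟨acceptsFrom_congr_root (fun x y h => by rw [ht] at h ⊢; exact h) rfl,
   acceptsFrom_congr_root (fun x y h => by rw [ht] at h ⊢; exact h) rfl⟩

theorem accepts_N_a {t : Tree4} (ht : t [] = A4.la) :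
    AcceptsFrom .N t ↔ AcceptsFrom .l1 t :=
  ⟨acceptsFrom_congr_root (fun x y h => by rw [ht] at h ⊢; exact h) rfl,
   acceptsFrom_congr_root (fun x y h => by rw [ht] at h ⊢; exact h) rfl⟩

theorem accepts_N_b {t : Tree4} (ht : t [] = A4.lb) : AcceptsFrom .N t :=
  glue1 (show deltaC .N (t []) .top0 .top0 by rw [ht]; exact ⟨rfl, rfl⟩)
    (top0_accepts _) (top0_accepts _)

theorem rejects_P_b {t : Tree4} (ht : t [] = A4.lb) : ¬ AcceptsFrom .P t := by
  rintro ⟨ρ, hacc⟩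
  have hd := hacc.1.2 []
  rw [hacc.1.1, ht] at hd
  exact run_ne_bot1 hacc ([] ++ [0]) hd.1

/-! ### Existence constructions at a disjunction -/

theorem subt_shift (t : Tree4) (k : ℕ) :
    subt (subt t [0]) (List.replicate k 0 ++ [1]) =
      subt t (List.replicate (k+1) 0 ++ [1]) := by
  rw [subt_subt]
  congr 1

theorem P_spine : ∀ (n : ℕ) (t : Tree4), t ∉ Wbad → t [] = A4.lor →
    (∀ k, k < n → AcceptsFrom .N (subt t (List.replicate k 0 ++ [1]))) →
    AcceptsFrom .P (subt t (List.replicate n 0 ++ [1])) →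
    ∀ q, (q = QC.P ∨ q = QC.Pv) → AcceptsFrom q t := by
  intro n
  induction n with
  | zero =>
      intro t hW ht _ hP q hq
      have hsubW : subt t [0] ∉ Wbad :=
        notW_child hW (Or.inl ht) (fun hx => absurd hx (by rw [ht]; decide))
      have hsubl : subt t [0] [] = A4.lor := by
        rw [subt_apply, List.append_nil]
        exact notW_left_lor hW ht
      refine glue1 (?_ : deltaC q (t []) QC.Tv QC.P) ?_ ?_
      · rcases hq with rfl | rfl <;> rw [ht] <;> exact Or.inl ⟨rfl, rfl⟩
      · exact TvTS_accepts hsubW (Or.inr ⟨rfl, hsubl⟩)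
      · exact hP
  | succ n ih =>
      intro t hW ht hN hP q hq
      have hsubW : subt t [0] ∉ Wbad :=
        notW_child hW (Or.inl ht) (fun hx => absurd hx (by rw [ht]; decide))
      have hsubl : subt t [0] [] = A4.lor := by
        rw [subt_apply, List.append_nil]
        exact notW_left_lor hW ht
      refine glue1 (?_ : deltaC q (t []) QC.Pv QC.N) ?_ ?_
      · rcases hq with rfl | rfl <;> rw [ht] <;> exact Or.inr ⟨rfl, rfl⟩
      · refine ih (subt t [0]) hsubW hsubl (fun k hk => ?_) ?_ .Pv (Or.inr rfl)
        · rw [subt_shift]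
          exact hN (k+1) (by omega)
        · rw [subt_shift]
          exact hP
      · exact hN 0 (by omega)

theorem N_spine {t : Tree4} (hW : t ∉ Wbad) (ht : t [] = A4.lor)
    (hN : ∀ k, AcceptsFrom .N (subt t (List.replicate k 0 ++ [1]))) :
    AcceptsFrom .N t := by
  have hmain := glueBranch (t := t) (fun _ => 0)
    (fun k => match k with | 0 => QC.N | _+1 => QC.Nv) (fun _ => QC.N) ?_ ?_ ?_
  · exact hmain
  · intro k
    have hl : t (pre (fun _ => (0 : Fin 2)) k) = A4.lor := by
      rw [pre_const0]
      exact (notW_spine_lor hW ht k).1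
    rw [hl, if_pos rfl, if_pos rfl]
    cases k with
    | zero => exact ⟨rfl, rfl⟩
    | succ k => exact ⟨rfl, rfl⟩
  · intro k
    rw [pre_const0]
    exact hN k
  · refine parityOk_of_eventually (N := 1) (fun n hn => ?_)
    obtain ⟨n', rfl⟩ : ∃ n', n = n' + 1 := ⟨n - 1, by omega⟩
    rfl

/-! ### The main induction -/

theorem main_PN : ∀ t : Tree4, t ∉ Wbad →
    (AcceptsFrom .P t ∨ AcceptsFrom .N t) ∧
      ¬ (AcceptsFrom .P t ∧ AcceptsFrom .N t) := by
  intro t0 h0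
  have hacc := acc_step_of_notW h0
  revert h0
  induction hacc with
  | intro t hst ih =>
      intro hW
      cases ht : t [] with
      | la =>
          constructor
          · by_cases hg : Gset t
            · exact Or.inl ((accepts_P_a ht).mpr (g1_accepts hg))
            · exact Or.inr ((accepts_N_a ht).mpr (l1_accepts hg))
          · rintro ⟨h1, h2⟩
            by_cases hg : Gset t
            · exact l1_rejects hg ((accepts_N_a ht).mp h2)
            · exact g1_rejects hg ((accepts_P_a ht).mp h1)
      | lb =>
          exact ⟨Or.inr (accepts_N_b ht), fun ⟨h1, _⟩ => rejects_P_b ht h1⟩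
      | lneg =>
          have hsub : subt t [1] ∉ Wbad := notW_neg_child hW ht
          have hstep1 : Step (subt t [1]) t := ⟨[1], Or.inl ⟨ht, rfl⟩, rfl⟩
          obtain ⟨hex, huniq⟩ := ih _ hstep1 hsub
          constructor
          · rcases hex with h1 | h1
            · exact Or.inr (glue1
                (show deltaC .N (t []) .Top .P by rw [ht]; exact ⟨rfl, rfl⟩)
                (top_accepts _) h1)
            · exact Or.inl (glue1
                (show deltaC .P (t []) .Top .N by rw [ht]; exact ⟨rfl, rfl⟩)
                (top_accepts _) h1)
          · rintro ⟨h1, h2⟩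
            obtain ⟨ρ, hacc⟩ := h1
            have hd := hacc.1.2 []
            rw [hacc.1.1, ht] at hd
            have hNsub : AcceptsFrom .N (subt t [1]) := by
              have hr := accepts_restrict hacc [1]
              rwa [show ρ [1] = QC.N from hd.2] at hr
            obtain ⟨ρ', hacc'⟩ := h2
            have hd' := hacc'.1.2 []
            rw [hacc'.1.1, ht] at hd'
            have hPsub : AcceptsFrom .P (subt t [1]) := by
              have hr := accepts_restrict hacc' [1]
              rwa [show ρ' [1] = QC.P from hd'.2] at hr
            exact huniq ⟨hPsub, hNsub⟩
      | lor =>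
          have hDW : ∀ k, subt t (List.replicate k 0 ++ [1]) ∉ Wbad :=
            notW_disjunct hW ht
          have hDstep : ∀ k, Step (subt t (List.replicate k 0 ++ [1])) t := fun k =>
            ⟨_, Or.inr ⟨k, rfl, fun j _ => (notW_spine_lor hW ht j).1⟩, rfl⟩
          have ihD := fun k => ih _ (hDstep k) (hDW k)
          constructor
          · by_cases hp : ∃ k, AcceptsFrom .P (subt t (List.replicate k 0 ++ [1]))
            · classical
              have hPk := Nat.find_spec hp
              have hNj : ∀ j, j < Nat.find hp →
                  AcceptsFrom .N (subt t (List.replicate j 0 ++ [1])) := fun j hj =>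
                (ihD j).1.resolve_left (Nat.find_min hp hj)
              exact Or.inl (P_spine (Nat.find hp) t hW ht hNj hPk .P (Or.inl rfl))
            · push_neg at hp
              have hNall : ∀ k, AcceptsFrom .N (subt t (List.replicate k 0 ++ [1])) :=
                fun k => (ihD k).1.resolve_left (hp k)
              exact Or.inr (N_spine hW ht hNall)
          · rintro ⟨h1, h2⟩
            obtain ⟨ρN, haccN⟩ := h2
            have hNspine : ∀ k, ρN (List.replicate k 0) = .N ∨
                ρN (List.replicate k 0) = .Nv := by
              intro k
              induction k with
              | zero => exact Or.inl haccN.1.1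
              | succ k ihk =>
                  have hd := haccN.1.2 (List.replicate k 0)
                  rw [(notW_spine_lor hW ht k).1] at hd
                  rw [List.replicate_succ']
                  rcases ihk with h' | h' <;> rw [h'] at hd <;> exact Or.inr hd.1
            have hNd : ∀ k, AcceptsFrom .N (subt t (List.replicate k 0 ++ [1])) := by
              intro k
              have hd := haccN.1.2 (List.replicate k 0)
              rw [(notW_spine_lor hW ht k).1] at hd
              have he : ρN (List.replicate k 0 ++ [1]) = .N := by
                rcases hNspine k with h' | h' <;> rw [h'] at hd <;> exact hd.2
              have hr := accepts_restrict haccN (List.replicate k 0 ++ [1])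
              rwa [he] at hr
            obtain ⟨ρP, haccP⟩ := h1
            have hPk : ∃ k, AcceptsFrom .P (subt t (List.replicate k 0 ++ [1])) := by
              by_contra hc
              push_neg at hc
              have hPspine : ∀ k, ρP (List.replicate k 0) = .P ∨
                  ρP (List.replicate k 0) = .Pv := by
                intro k
                induction k with
                | zero => exact Or.inl haccP.1.1
                | succ k ihk =>
                    have hd := haccP.1.2 (List.replicate k 0)
                    rw [(notW_spine_lor hW ht k).1] at hd
                    rw [List.replicate_succ']
                    have hd' : (ρP (List.replicate k 0 ++ [0]) = QC.Tv ∧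
                        ρP (List.replicate k 0 ++ [1]) = QC.P) ∨
                        (ρP (List.replicate k 0 ++ [0]) = QC.Pv ∧
                        ρP (List.replicate k 0 ++ [1]) = QC.N) := by
                      rcases ihk with h' | h' <;> rw [h'] at hd <;> exact hd
                    rcases hd' with ⟨e0, e1⟩ | ⟨e0, e1⟩
                    · exfalso
                      apply hc k
                      have hr := accepts_restrict haccP (List.replicate k 0 ++ [1])
                      rwa [e1] at hr
                    · exact Or.inr e0
              have hpp := haccP.2 (fun _ => 0)
              refine not_parityOk (r := 1) (N := 0) (by decide)
                (fun m => ⟨m, le_refl _, ?_⟩) (fun n _ => ?_) hpp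
              · show rankC (ρP (pre (fun _ => 0) m)) = 1
                rw [pre_const0]
                rcases hPspine m with h' | h' <;> rw [h'] <;> rfl
              · show rankC (ρP (pre (fun _ => 0) n)) ≤ 1
                rw [pre_const0]
                rcases hPspine n with h' | h' <;> rw [h'] <;> decide
            obtain ⟨k, hk⟩ := hPk
            exact (ihD k).2 ⟨hk, hNd k⟩
/-- Partition lemma: no tree in `W` is accepted from `P` or from `N`, and every tree
outside `W` is accepted from exactly one of the states `P`, `N`. -/
theorem C_partition :
    (∀ t ∈ Wbad, ¬ AcceptsFrom QC.P t ∧ ¬ AcceptsFrom QC.N t) ∧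
    (∀ t : Tree4, t ∉ Wbad → (AcceptsFrom QC.P t ↔ ¬ AcceptsFrom QC.N t)) := by
  constructor
  · intro t ht
    exact ⟨Wbad_rejects ht (Or.inl rfl), Wbad_rejects ht (Or.inr rfl)⟩
  · intro t ht
    obtain ⟨hex, hun⟩ := main_PN t ht
    constructor
    · intro hP hN
      exact hun ⟨hP, hN⟩
    · intro hnN
      rcases hex with h | h
      · exact h
      · exact absurd h hnN
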